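/- For every integer n and all natural numbers m and k, the identity C(n, m)·C(n, k) = Σ_{i=0}^{k} C(m+k-i, k)·C(k, i)·C(n, m+k-i) holds in ℤ. -/

import Mathlib

open Finset

/-- For every integer `n` and all natural numbers `m` and `k`, the identity
`C(n, m)·C(n, k) = Σ_{i=0}^{k} C(m+k-i, k)·C(k, i)·C(n, m+k-i)` holds in `ℤ`. -/
theorem stmt4 (n : ℤ) (m k : ℕ) :
    Ring.choose n m * Ring.choose n k =
      ∑ i ∈ Finset.range (k + 1),
        Ring.choose ((m + k - i : ℕ) : ℤ) k * Ring.choose ((k : ℤ)) i *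
          Ring.choose n (m + k - i) := by
  set g : ℕ → ℤ := fun i =>
    (k.choose i : ℤ) * (if i ≤ m then Ring.choose (n - (k : ℤ)) (m - i) else 0) with hg
  -- Vandermonde: choose n m = ∑_{i ≤ m} C(k,i) * choose (n-k) (m-i)
  have hV : Ring.choose n m = ∑ i ∈ range (m + 1), g i := by
    have h := Ring.add_choose_eq (r := ((k : ℕ) : ℤ)) (s := n - (k : ℤ)) m (Commute.all _ _)
    have hnk : ((k : ℕ) : ℤ) + (n - (k : ℤ)) = n := by ring
    rw [hnk] at h
    rw [h, Finset.Nat.sum_antidiagonal_eq_sum_range_succ_mk]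
    refine sum_congr rfl fun i hi => ?_
    rw [Ring.choose_natCast, hg]
    simp only [if_pos (Nat.lt_succ_iff.mp (mem_range.mp hi))]
  -- each RHS summand equals choose n k * g i
  have key : ∀ i : ℕ,
      Ring.choose ((m + k - i : ℕ) : ℤ) k * Ring.choose ((k : ℤ)) i *
        Ring.choose n (m + k - i) = Ring.choose n k * g i := by
    intro i
    by_cases him : i ≤ m
    · have hk1 : k ≤ m + k - i := by omega
      have h2 := Ring.choose_smul_choose (r := n) (n := m + k - i) (k := k) hk1
      have h3 : m + k - i - k = m - i := by omega
      rw [h3] at h2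
      rw [Ring.choose_natCast, Ring.choose_natCast, hg]
      simp only [if_pos him]
      rw [show (((m + k - i).choose k : ℤ)) * (k.choose i : ℤ) * Ring.choose n (m + k - i) =
        (k.choose i : ℤ) * ((m + k - i).choose k • Ring.choose n (m + k - i)) by
          rw [nsmul_eq_mul]; ring, h2]
      ring
    · have h0 : (m + k - i).choose k * k.choose i = 0 := by
        rcases le_or_gt i k with hik | hik
        · exact mul_eq_zero_of_left (Nat.choose_eq_zero_of_lt (by omega)) _
        · exact mul_eq_zero_of_right _ (Nat.choose_eq_zero_of_lt hik)
      rw [Ring.choose_natCast, Ring.choose_natCast, ← Nat.cast_mul, h0, hg]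
      simp [if_neg him]
  -- the common extended range
  have hsub1 : ∑ i ∈ range (k + 1), g i = ∑ i ∈ range (max k m + 1), g i := by
    refine sum_subset (range_subset_range.mpr (by omega)) fun i _ hi => ?_
    have hki : k < i := by simp only [mem_range] at hi; omega
    rw [hg]
    simp [Nat.choose_eq_zero_of_lt hki]
  have hsub2 : ∑ i ∈ range (m + 1), g i = ∑ i ∈ range (max k m + 1), g i := by
    refine sum_subset (range_subset_range.mpr (by omega)) fun i _ hi => ?_
    have hmi : m < i := by simp only [mem_range] at hi; omega
    rw [hg]
    simp [if_neg (by omega : ¬ i ≤ m)]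
  calc Ring.choose n m * Ring.choose n k
      = Ring.choose n k * ∑ i ∈ range (m + 1), g i := by rw [hV]; ring
    _ = Ring.choose n k * ∑ i ∈ range (k + 1), g i := by rw [hsub1, hsub2]
    _ = ∑ i ∈ range (k + 1), Ring.choose n k * g i := by rw [mul_sum]
    _ = _ := sum_congr rfl fun i _ => (key i).symm
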